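/- Suppose μ and Λ satisfy the continuity and density assumptions of Theorem 1. If ν is a Λ-pseudo tangent measure of μ at some point Q ∈ Σ, then 0 ∈ spt(ν), i.e. ν(B(0,r)) > 0 for every r > 0. -/

import Mathlib

open MeasureTheory Metric Filter
open scoped RealInnerProductSpace ENNReal Topology

noncomputable section

abbrev Euc (n : ℕ) : Type := EuclideanSpace ℝ (Fin (n + 1))

/-- A continuous linear equivalence regarded as a continuous linear map. -/
def clm {n : ℕ} (A : Euc n ≃L[ℝ] Euc n) : Euc n →L[ℝ] Euc n := A

/-- Smallest eigenvalue of a symmetric operator, via the Rayleigh quotient. -/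
def lamMin {n : ℕ} (A : Euc n →L[ℝ] Euc n) : ℝ :=
  sInf {t : ℝ | ∃ v : Euc n, ‖v‖ = 1 ∧ ⟪A v, v⟫ = t}

/-- Largest eigenvalue of a symmetric operator, via the Rayleigh quotient. -/
def lamMax {n : ℕ} (A : Euc n →L[ℝ] Euc n) : ℝ :=
  sSup {t : ℝ | ∃ v : Euc n, ‖v‖ = 1 ∧ ⟪A v, v⟫ = t}

/-- Symmetric positive definite operator. -/
def IsSymPD {n : ℕ} (A : Euc n →L[ℝ] Euc n) : Prop :=
  (∀ v w : Euc n, ⟪A v, w⟫ = ⟪v, A w⟫) ∧ ∀ v : Euc n, v ≠ 0 → 0 < ⟪A v, v⟫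

/-- Local Hölder continuity (with exponent β) of a matrix-valued map, in operator norm. -/
def HolderOnCompacts {n : ℕ} (Λ : Euc n → (Euc n ≃L[ℝ] Euc n)) (β : ℝ) : Prop :=
  ∀ K : Set (Euc n), IsCompact K → ∃ H > 0, ∀ X ∈ K, ∀ Y ∈ K,
    ‖clm (Λ X) - clm (Λ Y)‖ ≤ H * ‖X - Y‖ ^ β

/-- The ellipse `B_Λ(X, r) = X + Λ(X)·B(0,r)`. -/
def BLam {n : ℕ} (Λ : Euc n → (Euc n ≃L[ℝ] Euc n)) (X : Euc n) (r : ℝ) :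
    Set (Euc n) :=
  (fun W => X + (Λ X) W) '' Metric.ball (0 : Euc n) r

/-- The non-concentric ellipse `B_Λ(X, X̄, r) = X + Λ(X̄)·B(0,r)`. -/
def BLam2 {n : ℕ} (Λ : Euc n → (Euc n ≃L[ℝ] Euc n)) (X Xb : Euc n) (r : ℝ) :
    Set (Euc n) :=
  (fun W => X + (Λ Xb) W) '' Metric.ball (0 : Euc n) r

/-- Lebesgue measure of the unit ball of `ℝ^n`. -/
def omegaN (n : ℕ) : ℝ :=
  (MeasureTheory.volume (Metric.ball (0 : EuclideanSpace ℝ (Fin n)) 1)).toReal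

/-- Support of a measure. -/
def msupport {n : ℕ} (μ : Measure (Euc n)) : Set (Euc n) :=
  {X | ∀ r : ℝ, 0 < r → 0 < μ (Metric.ball X r)}

/-- Density assumption of Theorem 1: Hölder convergence of anisotropic density ratios to 1. -/
def DensityHolder {n : ℕ} (Λ : Euc n → (Euc n ≃L[ℝ] Euc n)) (μ : Measure (Euc n)) (α : ℝ) :
    Prop :=
  ∀ K : Set (Euc n), IsCompact K → ∃ C > 0, ∀ X ∈ msupport μ ∩ K, ∀ r : ℝ, 0 < r → r ≤ 1 →
    |(μ (BLam Λ X r)).toReal / (omegaN n * r ^ n) - 1| ≤ C * r ^ α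

/-- Doubling assumption of Theorem 2: Hölder asymptotically optimal doubling. -/
def DoublingHolder {n : ℕ} (Λ : Euc n → (Euc n ≃L[ℝ] Euc n)) (μ : Measure (Euc n)) (α : ℝ) :
    Prop :=
  ∀ K : Set (Euc n), IsCompact K → ∃ C > 0, ∀ X ∈ msupport μ ∩ K,
    ∀ t ∈ Set.Icc (1 / 2 : ℝ) 1, ∀ r : ℝ, 0 < r → r ≤ 1 →
      |(μ (BLam Λ X (t * r))).toReal / (μ (BLam Λ X r)).toReal - t ^ n| ≤ C * r ^ α

/-- `μ` is Λ-asymptotically optimally doubling of dimension `m`. -/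
def IsLamAOD {n : ℕ} (Λ : Euc n → (Euc n ≃L[ℝ] Euc n)) (μ : Measure (Euc n)) (m : ℕ) : Prop :=
  ∀ K : Set (Euc n), IsCompact K → ∀ ε : ℝ, 0 < ε → ∃ r₀ > 0, ∀ r : ℝ, 0 < r → r ≤ r₀ →
    ∀ X ∈ msupport μ ∩ K, ∀ t ∈ Set.Icc (1 / 2 : ℝ) 1,
      |(μ (BLam Λ X (t * r))).toReal / (μ (BLam Λ X r)).toReal - t ^ m| ≤ ε

/-- Anisotropic blow-up map `T^Λ_{P,r}(Z) = Λ(P)⁻¹((Z − P)/r)`. -/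
def TLam {n : ℕ} (Λ : Euc n → (Euc n ≃L[ℝ] Euc n)) (P : Euc n) (r : ℝ)
    (Z : Euc n) : Euc n :=
  (Λ P).symm (r⁻¹ • (Z - P))

/-- The rescaled measure `μ_{P,r} = μ(B_Λ(P,r))⁻¹ · (T^Λ_{P,r})_* μ`. -/
def scaled {n : ℕ} (Λ : Euc n → (Euc n ≃L[ℝ] Euc n)) (μ : Measure (Euc n))
    (P : Euc n) (r : ℝ) : Measure (Euc n) :=
  (μ (BLam Λ P r))⁻¹ • Measure.map (TLam Λ P r) μ

/-- Weak convergence of a sequence of measures tested against `C_c` functions. -/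
def WeakLim {n : ℕ} (μs : ℕ → Measure (Euc n)) (ν : Measure (Euc n)) : Prop :=
  ∀ f : Euc n → ℝ, Continuous f → HasCompactSupport f →
    Tendsto (fun i => ∫ x, f x ∂(μs i)) atTop (nhds (∫ x, f x ∂ν))

/-- `ν` is a Λ-pseudo tangent measure of `μ` at `Q`. -/
def IsPseudoTangentAt {n : ℕ} (Λ : Euc n → (Euc n ≃L[ℝ] Euc n)) (μ : Measure (Euc n))
    (Q : Euc n) (ν : Measure (Euc n)) : Prop :=
  ν ≠ 0 ∧ ∃ Qs : ℕ → Euc n, ∃ ρs : ℕ → ℝ,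
    (∀ i, Qs i ∈ msupport μ) ∧ (∀ i, 0 < ρs i) ∧
    Tendsto Qs atTop (nhds Q) ∧ Tendsto ρs atTop (nhds (0 : ℝ)) ∧
    WeakLim (fun i => scaled Λ μ (Qs i) (ρs i)) ν

/-- `λ_min(K)`: infimum of smallest eigenvalues over the 1-neighborhood of `S`. -/
def lamMinOn {n : ℕ} (Λ : Euc n → (Euc n ≃L[ℝ] Euc n)) (S : Set (Euc n)) : ℝ :=
  sInf ((fun X => lamMin (clm (Λ X))) '' {X : Euc n | Metric.infDist X S ≤ 1})

/-- `λ_max(K)`: supremum of largest eigenvalues over the 1-neighborhood of `S`. -/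
def lamMaxOn {n : ℕ} (Λ : Euc n → (Euc n ≃L[ℝ] Euc n)) (S : Set (Euc n)) : ℝ :=
  sSup ((fun X => lamMax (clm (Λ X))) '' {X : Euc n | Metric.infDist X S ≤ 1})

/-- Local eccentricity `e_Λ(K) = λ_max(K)/λ_min(K)`. -/
def eLam {n : ℕ} (Λ : Euc n → (Euc n ≃L[ℝ] Euc n)) (S : Set (Euc n)) : ℝ :=
  lamMaxOn Λ S / lamMinOn Λ S

/-- Bilateral β-number `bβ_S(X,r)`: infimum over affine `m`-planes through `X` of the
normalized Hausdorff distance between `S` and the plane inside `B(X,r)`. -/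
def bbeta {n : ℕ} (m : ℕ) (S : Set (Euc n)) (X : Euc n) (r : ℝ) : ℝ :=
  sInf {d : ℝ | ∃ P : AffineSubspace ℝ (Euc n), X ∈ P ∧ Module.finrank ℝ P.direction = m ∧
    d = (1 / r) * Metric.hausdorffDist (S ∩ Metric.ball X r)
          ((P : Set (Euc n)) ∩ Metric.ball X r)}

/-- Unilateral (Jones-type) β-number `β_S(X,r)`. -/
def betaS {n : ℕ} (m : ℕ) (S : Set (Euc n)) (X : Euc n) (r : ℝ) : ℝ :=
  sInf {d : ℝ | ∃ P : AffineSubspace ℝ (Euc n), X ∈ P ∧ Module.finrank ℝ P.direction = m ∧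
    d = sSup {t : ℝ | ∃ Y ∈ S ∩ Metric.ball X r, t = Metric.infDist Y (P : Set (Euc n)) / r}}

/-- The singular set: points where the bilateral β-numbers do not tend to 0. -/
def singularSet {n : ℕ} (m : ℕ) (S : Set (Euc n)) : Set (Euc n) :=
  {X | X ∈ S ∧ 0 < Filter.limsup (fun r => bbeta m S X r) (nhdsWithin 0 (Set.Ioi (0 : ℝ)))}

end


section auxlemmas
open MeasureTheory Metric Filter
open scoped ENNReal Topology
variable {n : ℕ}

lemma continuous_TLam (Λ : Euc n → (Euc n ≃L[ℝ] Euc n)) (P : Euc n) (ρ : ℝ) :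
    Continuous (TLam Λ P ρ) := by
  unfold TLam; fun_prop

lemma TLam_preimage_ball (Λ : Euc n → (Euc n ≃L[ℝ] Euc n)) (P : Euc n) {ρ : ℝ} (s : ℝ)
    (hρ : 0 < ρ) :
    TLam Λ P ρ ⁻¹' Metric.ball 0 s = BLam Λ P (s * ρ) := by
  ext x
  have hmap : (Λ P).symm (ρ⁻¹ • (x - P)) = ρ⁻¹ • (Λ P).symm (x - P) := map_smul _ _ _
  simp only [Set.mem_preimage, mem_ball, dist_zero_right, TLam, BLam, Set.mem_image,
    hmap, norm_smul, norm_inv, Real.norm_eq_abs, abs_of_pos hρ]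
  rw [← div_eq_inv_mul, div_lt_iff₀ hρ]
  constructor
  · intro h
    exact ⟨(Λ P).symm (x - P), by simpa [dist_zero_right] using h, by simp⟩
  · rintro ⟨w, hw, rfl⟩
    simpa [dist_zero_right] using hw

lemma scaled_ball (Λ : Euc n → (Euc n ≃L[ℝ] Euc n)) (μ : Measure (Euc n))
    (P : Euc n) {ρ : ℝ} (s : ℝ) (hρ : 0 < ρ) :
    scaled Λ μ P ρ (Metric.ball 0 s) = μ (BLam Λ P (s * ρ)) / μ (BLam Λ P ρ) := by
  rw [scaled, Measure.smul_apply,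
    Measure.map_apply (continuous_TLam Λ P ρ).measurable measurableSet_ball,
    TLam_preimage_ball Λ P s hρ, smul_eq_mul, mul_comm, ← div_eq_mul_inv]

lemma measure_BLam_lt_top (Λ : Euc n → (Euc n ≃L[ℝ] Euc n)) (μ : Measure (Euc n))
    [IsLocallyFiniteMeasure μ] (P : Euc n) (t : ℝ) :
    μ (BLam Λ P t) < ⊤ := by
  have hK : IsCompact ((fun W => P + (Λ P) W) '' Metric.closedBall 0 t) :=
    (isCompact_closedBall _ _).image (by fun_prop)
  exact lt_of_le_of_lt (measure_mono (Set.image_mono ball_subset_closedBall))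
    hK.measure_lt_top

lemma measure_BLam_pos (Λ : Euc n → (Euc n ≃L[ℝ] Euc n)) (μ : Measure (Euc n))
    {P : Euc n} (hP : P ∈ msupport μ) {ρ : ℝ} (hρ : 0 < ρ) :
    0 < μ (BLam Λ P ρ) := by
  have hopen : IsOpen (BLam Λ P ρ) := by
    have : BLam Λ P ρ = (Homeomorph.addLeft P ∘ (Λ P).toHomeomorph) '' Metric.ball 0 ρ := rfl
    rw [this]
    exact (((Homeomorph.addLeft P).isOpenMap.comp
      (Λ P).toHomeomorph.isOpenMap)) _ isOpen_ball
  have hmem : P ∈ BLam Λ P ρ := ⟨0, by simpa using hρ, by simp⟩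
  obtain ⟨ε, hε, hsub⟩ := Metric.isOpen_iff.1 hopen P hmem
  exact lt_of_lt_of_le (hP ε hε) (measure_mono hsub)

lemma omegaN_pos (n : ℕ) : 0 < omegaN n := by
  rw [omegaN]
  exact ENNReal.toReal_pos (measure_ball_pos volume _ one_pos).ne' measure_ball_lt_top.ne

end auxlemmas

/-- The origin lies in the support of any Λ-pseudo tangent measure. -/
theorem zero_mem_support_pseudo_tangent (n : ℕ) (α β : ℝ)
    (hα : α ∈ Set.Ioo (0 : ℝ) 1) (hβ : β ∈ Set.Ioo (0 : ℝ) 1)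
    (Λ : Euc n → (Euc n ≃L[ℝ] Euc n))
    (hPD : ∀ X : Euc n, IsSymPD (clm (Λ X)))
    (hHol : HolderOnCompacts Λ β)
    (μ : Measure (Euc n)) [IsLocallyFiniteMeasure μ]
    (hden : DensityHolder Λ μ α)
    (Q : Euc n) (hQ : Q ∈ msupport μ)
    (ν : Measure (Euc n)) (hν : IsPseudoTangentAt Λ μ Q ν) :
    ∀ r : ℝ, 0 < r → 0 < ν (Metric.ball (0 : Euc n) r) := by
  intro r hr
  obtain ⟨hν0, Qs, ρs, hQspt, hρpos, hQlim, hρlim, hweak⟩ := hν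
  rw [pos_iff_ne_zero]
  intro hball0
  -- the test function
  set s : ℝ := min (r/2) (1/2) with hs_def
  have hs_pos : 0 < s := lt_min (by linarith) (by norm_num)
  have hs_le_half : s ≤ 1/2 := min_le_right _ _
  have hs_lt_r : s < r := lt_of_le_of_lt (min_le_left _ _) (by linarith)
  set δ : ℝ := (r - s)/2 with hδ_def
  have hδ_pos : 0 < δ := by rw [hδ_def]; linarith
  set f : Euc n → ℝ :=
    fun x => ((thickenedIndicator hδ_pos (Metric.closedBall (0 : Euc n) s)) x : ℝ) with hf_def
  have hf_nonneg : ∀ x, 0 ≤ f x := fun x => NNReal.coe_nonneg _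
  have hth : Metric.thickening δ (Metric.closedBall (0:Euc n) s) = Metric.ball 0 (δ + s) :=
    thickening_closedBall hδ_pos hs_pos.le 0
  have hsupp_sub : Function.support f ⊆ Metric.ball (0:Euc n) r := by
    intro x hx
    have hne : thickenedIndicator hδ_pos (Metric.closedBall (0:Euc n) s) x ≠ 0 := by
      intro h0
      apply hx
      show ((thickenedIndicator hδ_pos (Metric.closedBall (0:Euc n) s)) x : ℝ) = 0
      rw [h0, NNReal.coe_zero]
    have hxth : x ∈ Metric.thickening δ (Metric.closedBall (0:Euc n) s) := by
      by_contra h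
      exact hne (thickenedIndicator_zero hδ_pos _ h)
    rw [hth] at hxth
    exact Metric.ball_subset_ball (by linarith : δ + s ≤ r) hxth
  have hf_cont : Continuous f :=
    NNReal.continuous_coe.comp (thickenedIndicator hδ_pos (Metric.closedBall 0 s)).continuous
  have hf_supp : HasCompactSupport f := by
    apply HasCompactSupport.intro (isCompact_closedBall (0:Euc n) r)
    intro x hx
    by_contra hne
    exact hx (Metric.ball_subset_closedBall (hsupp_sub hne))
  -- the integral of f against ν vanishes
  have hae : f =ᵐ[ν] 0 := by
    rw [Filter.EventuallyEq, MeasureTheory.ae_iff]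
    refine measure_mono_null ?_ hball0
    intro x hx
    exact hsupp_sub (by simpa using hx)
  have hint0 : ∫ x, f x ∂ν = 0 := by
    rw [MeasureTheory.integral_congr_ae hae]
    simp
  have hlim := hweak f hf_cont hf_supp
  rw [hint0] at hlim
  -- density estimates
  obtain ⟨C, hC, hbound⟩ := hden (Metric.closedBall Q 1) (isCompact_closedBall _ _)
  set ρ₀ : ℝ := min 1 ((2*C)⁻¹ ^ α⁻¹) with hρ₀def
  have hρ₀pos : 0 < ρ₀ := lt_min one_pos (Real.rpow_pos_of_pos (by positivity) _)
  have hρ₀le1 : ρ₀ ≤ 1 := min_le_left _ _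
  have hCbound : ∀ t : ℝ, 0 < t → t ≤ ρ₀ → C * t ^ α ≤ 1/2 := by
    intro t ht htρ
    have h1 : t ^ α ≤ ((2*C)⁻¹ ^ α⁻¹ : ℝ) ^ α :=
      Real.rpow_le_rpow ht.le (le_trans htρ (min_le_right _ _)) hα.1.le
    have h2 : (((2*C)⁻¹ : ℝ) ^ α⁻¹) ^ α = (2*C)⁻¹ := by
      rw [← Real.rpow_mul (by positivity), inv_mul_cancel₀ (ne_of_gt hα.1), Real.rpow_one]
    calc C * t ^ α ≤ C * (2*C)⁻¹ := by
          rw [← h2]; exact mul_le_mul_of_nonneg_left h1 hC.le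
      _ = 1/2 := by field_simp
  have hω := omegaN_pos n
  -- eventual facts along the sequence
  have hev1 : ∀ᶠ i in atTop, Qs i ∈ Metric.closedBall Q 1 :=
    hQlim (Metric.closedBall_mem_nhds Q one_pos)
  have hev2 : ∀ᶠ i in atTop, ρs i < ρ₀ := by
    have := hρlim (Iio_mem_nhds hρ₀pos)
    exact this
  set c : ℝ := s^n / 3 with hc_def
  have hc : 0 < c := by positivity
  have hev3 : ∀ᶠ i in atTop, c ≤ ∫ x, f x ∂(scaled Λ μ (Qs i) (ρs i)) := by
    filter_upwards [hev1, hev2] with i hKmem hρ'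
    have hρpos' : 0 < ρs i := hρpos i
    have hρ1 : ρs i ≤ 1 := le_trans hρ'.le hρ₀le1
    have hsρpos : 0 < s * ρs i := by positivity
    have hsρ1 : s * ρs i ≤ 1 := by nlinarith
    have hsρρ₀ : s * ρs i ≤ ρ₀ := by nlinarith
    have hB2pos : 0 < μ (BLam Λ (Qs i) (ρs i)) := measure_BLam_pos Λ μ (hQspt i) hρpos'
    have hB2top : μ (BLam Λ (Qs i) (ρs i)) < ⊤ := measure_BLam_lt_top Λ μ _ _
    have hB1top : μ (BLam Λ (Qs i) (s * ρs i)) < ⊤ := measure_BLam_lt_top Λ μ _ _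
    have hmem : Qs i ∈ msupport μ ∩ Metric.closedBall Q 1 := ⟨hQspt i, hKmem⟩
    set A : ℝ := (μ (BLam Λ (Qs i) (s * ρs i))).toReal with hA_def
    set B : ℝ := (μ (BLam Λ (Qs i) (ρs i))).toReal with hB_def
    have hy2 : 0 < omegaN n * (ρs i)^n := by positivity
    have hy1 : 0 < omegaN n * (s * ρs i)^n := by positivity
    -- upper bound for B
    have h2' : B ≤ 3/2 * (omegaN n * (ρs i)^n) := by
      have habs := abs_le.1 (hbound _ hmem (ρs i) hρpos' hρ1)
      have hC2 := hCbound (ρs i) hρpos' hρ'.le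
      have hu2 : B / (omegaN n * (ρs i)^n) ≤ 3/2 := by linarith [habs.2]
      calc B = B / (omegaN n * (ρs i)^n) * (omegaN n * (ρs i)^n) :=
            (div_mul_cancel₀ B hy2.ne').symm
        _ ≤ 3/2 * (omegaN n * (ρs i)^n) := mul_le_mul_of_nonneg_right hu2 hy2.le
    -- lower bound for A
    have h1' : 1/2 * (omegaN n * (s * ρs i)^n) ≤ A := by
      have habs := abs_le.1 (hbound _ hmem (s * ρs i) hsρpos hsρ1)
      have hC1 := hCbound (s * ρs i) hsρpos hsρρ₀
      have hu1 : (1:ℝ)/2 ≤ A / (omegaN n * (s * ρs i)^n) := by linarith [habs.1]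
      calc 1/2 * (omegaN n * (s * ρs i)^n)
          ≤ A / (omegaN n * (s * ρs i)^n) * (omegaN n * (s * ρs i)^n) :=
            mul_le_mul_of_nonneg_right hu1 hy1.le
        _ = A := div_mul_cancel₀ A hy1.ne'
    have hBpos' : 0 < B := ENNReal.toReal_pos hB2pos.ne' hB2top.ne
    have hball : (scaled Λ μ (Qs i) (ρs i)) (Metric.ball 0 s)
        = μ (BLam Λ (Qs i) (s * ρs i)) / μ (BLam Λ (Qs i) (ρs i)) :=
      scaled_ball Λ μ (Qs i) s hρpos'
    have hBtoReal : (((scaled Λ μ (Qs i) (ρs i))) (Metric.ball 0 s)).toReal = A / B := by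
      rw [hball, ENNReal.toReal_div]
    have hratio : c ≤ A / B := by
      rw [le_div_iff₀ hBpos']
      calc c * B ≤ c * (3/2 * (omegaN n * (ρs i)^n)) := mul_le_mul_of_nonneg_left h2' hc.le
        _ = 1/2 * (omegaN n * (s * ρs i)^n) := by rw [hc_def, mul_pow]; ring
        _ ≤ A := h1'
    haveI hfinc : IsFiniteMeasureOnCompacts (scaled Λ μ (Qs i) (ρs i)) := by
      constructor
      intro K hK'
      obtain ⟨R, hR⟩ := hK'.isBounded.subset_closedBall 0
      have hsub : K ⊆ Metric.ball (0:Euc n) (R+1) :=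
        hR.trans (Metric.closedBall_subset_ball (by linarith))
      calc (scaled Λ μ (Qs i) (ρs i)) K
          ≤ (scaled Λ μ (Qs i) (ρs i)) (Metric.ball 0 (R+1)) := measure_mono hsub
        _ = μ (BLam Λ (Qs i) ((R+1) * ρs i)) / μ (BLam Λ (Qs i) (ρs i)) :=
            scaled_ball Λ μ (Qs i) (R+1) hρpos'
        _ < ⊤ := ENNReal.div_lt_top (measure_BLam_lt_top Λ μ _ _).ne hB2pos.ne'
    have hintf : Integrable f (scaled Λ μ (Qs i) (ρs i)) :=
      hf_cont.integrable_of_hasCompactSupport hf_supp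
    have hballtop : (scaled Λ μ (Qs i) (ρs i)) (Metric.ball 0 s) < ⊤ := by
      rw [hball]; exact ENNReal.div_lt_top hB1top.ne hB2pos.ne'
    have hind : Integrable ((Metric.ball (0:Euc n) s).indicator fun _ => (1:ℝ))
        (scaled Λ μ (Qs i) (ρs i)) := by
      rw [integrable_indicator_iff measurableSet_ball]
      exact integrableOn_const hballtop.ne
    have hle : ∀ x, (Metric.ball (0:Euc n) s).indicator (fun _ => (1:ℝ)) x ≤ f x := by
      intro x
      by_cases hx : x ∈ Metric.ball (0:Euc n) s
      · rw [Set.indicator_of_mem hx]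
        have h1 : thickenedIndicator hδ_pos (Metric.closedBall (0:Euc n) s) x = 1 :=
          thickenedIndicator_one hδ_pos _ (Metric.ball_subset_closedBall hx)
        show (1:ℝ) ≤ ((thickenedIndicator hδ_pos (Metric.closedBall (0:Euc n) s)) x : ℝ)
        rw [h1, NNReal.coe_one]
      · rw [Set.indicator_of_notMem hx]
        exact hf_nonneg x
    calc c ≤ A / B := hratio
      _ = (((scaled Λ μ (Qs i) (ρs i))) (Metric.ball 0 s)).toReal := hBtoReal.symm
      _ = ∫ x, (Metric.ball (0:Euc n) s).indicator (fun _ => (1:ℝ)) x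
            ∂(scaled Λ μ (Qs i) (ρs i)) := by
          rw [MeasureTheory.integral_indicator_const (1:ℝ) measurableSet_ball,
            smul_eq_mul, mul_one]
          rfl
      _ ≤ ∫ x, f x ∂(scaled Λ μ (Qs i) (ρs i)) := integral_mono hind hintf hle
  have hfinal : c ≤ 0 := ge_of_tendsto hlim hev3
  linarith
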